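/- Let l ≥ 1 and let ψ = (ψ_0,…,ψ_{l-1}) be a tuple of polynomials in k[x_1,…,x_r]. Then for every 0 ≤ a ≤ l−1, one has the identity a! · C(2l−1,a)^{−1} · f_{a,r,l,F_ψ} = ((2l−1)!/(2l−1−a)!) · g_{1,r+1}^{2l−1} + ∑_{i=a}^{l−1} (1/(i−a)!) · ψ̃_i · g_{1,r+1}^{i} in k[{g_{ij}}_{1≤i<j≤r+1}], where ψ̃_i = ψ_i(1, g_{12},…,g_{1r}) and C(2l−1,a)^{−1} is the reciprocal of the binomial coefficient in k. -/

import Mathlib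

open MvPolynomial Finset

/-- Index type for the strictly upper-triangular entries `g_{ij}`, `1 ≤ i < j ≤ r+1`. -/
abbrev UTIdx (r : ℕ) := {p : Fin (r + 1) × Fin (r + 1) // p.1 < p.2}

/-- The coordinate ring `k[{g_{ij}}_{1 ≤ i < j ≤ r+1}]` of the unipotent
upper-triangular group `U_{r+1}`. -/
abbrev URing (k : Type) [CommSemiring k] (r : ℕ) := MvPolynomial (UTIdx r) k

/-- The generic unipotent upper-triangular matrix: indeterminate entries `g_{ij}` for `i < j`,
`1` on the diagonal, `0` below the diagonal. -/
noncomputable def genMat (k : Type) [CommRing k] (r : ℕ) :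
    Matrix (Fin (r + 1)) (Fin (r + 1)) (URing k r) :=
  Matrix.of fun i j => if h : i < j then X ⟨(i, j), h⟩ else if i = j then 1 else 0

/-- Action of a matrix on polynomials via `g · xᵢ = ∑ⱼ gⱼᵢ xⱼ`. -/
noncomputable def glAct {R : Type*} [CommSemiring R] {n : ℕ}
    (g : Matrix (Fin n) (Fin n) R) (p : MvPolynomial (Fin n) R) : MvPolynomial (Fin n) R :=
  aeval (fun i => ∑ j, MvPolynomial.C (g j i) * X j) p

/-- A polynomial in `k[x₁,…,xᵣ]`, viewed in `(URing k r)[x₁,…,x_{r+1}]`. -/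
noncomputable def emb (k : Type) [CommRing k] (r : ℕ) (p : MvPolynomial (Fin r) k) :
    MvPolynomial (Fin (r + 1)) (URing k r) :=
  MvPolynomial.map (algebraMap k (URing k r)) (rename Fin.castSucc p)

/-- The first wedge factor `∑_{i=0}^{2l-1} x_{r+1}^i x₁^{2l-i} F_i` of `v_d^r(F)`. -/
noncomputable def vP (k : Type) [CommRing k] (r l : ℕ) (F : ℕ → MvPolynomial (Fin r) k) :
    MvPolynomial (Fin (r + 1)) (URing k r) :=
  ∑ i ∈ range (2 * l), X (Fin.last r) ^ i * X 0 ^ (2 * l - i) * emb k r (F i)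

/-- The second wedge factor `∑_{i=0}^{2l-1} x_{r+1}^{i+1} x₁^{2l-i-1} F_i` of `v_d^r(F)`. -/
noncomputable def vQ (k : Type) [CommRing k] (r l : ℕ) (F : ℕ → MvPolynomial (Fin r) k) :
    MvPolynomial (Fin (r + 1)) (URing k r) :=
  ∑ i ∈ range (2 * l), X (Fin.last r) ^ (i + 1) * X 0 ^ (2 * l - i - 1) * emb k r (F i)

/-- The monomial `x₁^{2l+d-a} x_{r+1}^{a}`. -/
noncomputable def mUp (r l d a : ℕ) : Fin (r + 1) →₀ ℕ :=
  Finsupp.single 0 (2 * l + d - a) + Finsupp.single (Fin.last r) a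

/-- The monomial `x₁^{d+a} x_{r+1}^{2l-a}`. -/
noncomputable def mDown (r l d a : ℕ) : Fin (r + 1) →₀ ℕ :=
  Finsupp.single 0 (d + a) + Finsupp.single (Fin.last r) (2 * l - a)

/-- `θ((g·v_d^r(F))_{x₁^{2l+d-a}x_{r+1}^a ∧ x₁^{d+a}x_{r+1}^{2l-a}})`: the coordinate of the
transform of `v_d^r(F)` by the generic unipotent upper-triangular matrix at the indicated
basis element of the exterior square, a polynomial in the variables `g_{ij}`. -/
noncomputable def thetaCoord (k : Type) [CommRing k] (r l d : ℕ)
    (F : ℕ → MvPolynomial (Fin r) k) (a : ℕ) : URing k r :=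
  coeff (mUp r l d a) (glAct (genMat k r) (vP k r l F)) *
      coeff (mDown r l d a) (glAct (genMat k r) (vQ k r l F)) -
    coeff (mDown r l d a) (glAct (genMat k r) (vP k r l F)) *
      coeff (mUp r l d a) (glAct (genMat k r) (vQ k r l F))

/-- The variable `g_{1,r+1}`. -/
noncomputable def gTop (k : Type) [CommRing k] (r : ℕ) : URing k r :=
  genMat k r 0 (Fin.last r)

/-- `p̃ = p(1, g_{12}, …, g_{1r})`. -/
noncomputable def tilde (k : Type) [CommRing k] (r : ℕ) (p : MvPolynomial (Fin r) k) :
    URing k r :=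
  aeval (fun j : Fin r => genMat k r 0 (Fin.castSucc j)) p

/-- The polynomial `f_{a,r,l,F} ∈ k[{g_{ij}}]`.  (Summands whose exponent of `g_{1,r+1}`
would be negative carry a vanishing binomial coefficient, so truncated subtraction in the
exponent gives the same element.) -/
noncomputable def fA (k : Type) [CommRing k] (r l : ℕ)
    (F : ℕ → MvPolynomial (Fin r) k) (a : ℕ) : URing k r :=
  (∑ i ∈ range (2 * l), ∑ j ∈ range (2 * l),
      if i < j then
        tilde k r (F i) * tilde k r (F j) * gTop k r ^ (i + j + 1 - 2 * l) *
          ((i.choose a * j.choose (2 * l - a - 1) +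
              i.choose (2 * l - a - 1) * j.choose a : ℕ) : URing k r)
      else 0) +
    ∑ i ∈ range (2 * l),
      tilde k r (F i) ^ 2 * gTop k r ^ (2 * i + 1 - 2 * l) *
        ((i.choose a * i.choose (2 * l - a - 1) : ℕ) : URing k r)

/-- The tuple `F_ψ`: `(F_ψ)_i = ψ_i/i!` for `0 ≤ i ≤ l−1`, `(F_ψ)_i = 0` for
`l ≤ i ≤ 2l−2`, and `(F_ψ)_{2l−1} = 1`. -/
noncomputable def Fpsi (k : Type) [Field k] (r l : ℕ) (ψ : ℕ → MvPolynomial (Fin r) k) :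
    ℕ → MvPolynomial (Fin r) k :=
  fun i => if i < l then ((i.factorial : k)⁻¹) • ψ i else if i = 2 * l - 1 then 1 else 0

/-- The polynomial `π_j^ψ ∈ k[{g_{ij}}]`. -/
noncomputable def piPsi (k : Type) [Field k] (r l : ℕ)
    (ψ : ℕ → MvPolynomial (Fin r) k) (j : ℕ) : URing k r :=
  MvPolynomial.C ((((2 * l - 1).factorial : k) / ((2 * l - 1 - j).factorial : k)) *
      ∑ a ∈ range (l - j), ((2 * l - 1 - j).choose a : k) * (-1 : k) ^ a) *
      gTop k r ^ (2 * l - 1) +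
    tilde k r (ψ j) * gTop k r ^ j


section Aux
variable {k : Type} [Field k] {r : ℕ}

lemma tilde_smul (c : k) (p : MvPolynomial (Fin r) k) :
    tilde k r (c • p) = MvPolynomial.C c * tilde k r p := by
  simp [tilde, Algebra.smul_def, algebraMap_eq]

lemma tilde_one : tilde k r (1 : MvPolynomial (Fin r) k) = 1 := by simp [tilde]

lemma tilde_zero : tilde k r (0 : MvPolynomial (Fin r) k) = 0 := by simp [tilde]

end Aux

/-- **Lemma 3.4, proof identity.** For `0 ≤ a ≤ l−1`:
`a!·C(2l−1,a)⁻¹·f_{a,r,l,F_ψ} = ((2l−1)!/(2l−1−a)!)·g_{1,r+1}^{2l−1} + ∑_{i=a}^{l−1} (1/(i−a)!)·ψ̃ᵢ·g_{1,r+1}^i`. -/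
theorem stmt4 {k : Type} [Field k] [CharZero k] (r l : ℕ) (hl : 1 ≤ l)
    (ψ : ℕ → MvPolynomial (Fin r) k) (a : ℕ) (ha : a ≤ l - 1) :
    MvPolynomial.C ((a.factorial : k) * (((2 * l - 1).choose a : k))⁻¹) *
        fA k r l (Fpsi k r l ψ) a
      = MvPolynomial.C (((2 * l - 1).factorial : k) / ((2 * l - 1 - a).factorial : k)) *
          gTop k r ^ (2 * l - 1) +
        ∑ i ∈ Finset.Icc a (l - 1),
          MvPolynomial.C (((i - a).factorial : k)⁻¹) * tilde k r (ψ i) * gTop k r ^ i := by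
  have ha' : a ≤ 2 * l - 1 := by omega
  have hbig : l ≤ 2 * l - a - 1 := by omega
  set G := gTop k r with hG
  set cc : k := ((2 * l - 1).choose a : k) with hcc
  have hccne : cc ≠ 0 := by
    rw [hcc]
    exact Nat.cast_ne_zero.mpr (Nat.choose_pos ha').ne' 
  have hcast : ∀ n : ℕ, ((n : URing k r)) = MvPolynomial.C ((n : k)) :=
    fun n => (map_natCast (MvPolynomial.C : k →+* URing k r) n).symm
  -- tilde values of Fpsi
  have htF : ∀ i, i < l → tilde k r (Fpsi k r l ψ i)
      = MvPolynomial.C ((i.factorial : k)⁻¹) * tilde k r (ψ i) := by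
    intro i hi
    rw [Fpsi, if_pos hi, tilde_smul]
  have htF0 : ∀ i, l ≤ i → i < 2 * l - 1 → tilde k r (Fpsi k r l ψ i) = 0 := by
    intro i h1 h2
    rw [Fpsi, if_neg (by omega), if_neg (by omega), tilde_zero]
  have htF1 : tilde k r (Fpsi k r l ψ (2 * l - 1)) = 1 := by
    rw [Fpsi, if_neg (by omega), if_pos rfl, tilde_one]
  -- the double sum
  have hdouble : (∑ i ∈ range (2 * l), ∑ j ∈ range (2 * l),
      if i < j then
        tilde k r (Fpsi k r l ψ i) * tilde k r (Fpsi k r l ψ j) * G ^ (i + j + 1 - 2 * l) *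
          ((i.choose a * j.choose (2 * l - a - 1) +
              i.choose (2 * l - a - 1) * j.choose a : ℕ) : URing k r)
      else 0)
      = ∑ i ∈ range l, MvPolynomial.C ((i.factorial : k)⁻¹ * (i.choose a * cc)) *
          tilde k r (ψ i) * G ^ i := by
    have hinner : ∀ i ∈ range (2 * l), (∑ j ∈ range (2 * l),
        if i < j then
          tilde k r (Fpsi k r l ψ i) * tilde k r (Fpsi k r l ψ j) * G ^ (i + j + 1 - 2 * l) *
            ((i.choose a * j.choose (2 * l - a - 1) +
                i.choose (2 * l - a - 1) * j.choose a : ℕ) : URing k r)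
        else 0)
        = if i < l then MvPolynomial.C ((i.factorial : k)⁻¹ * (i.choose a * cc)) *
            tilde k r (ψ i) * G ^ i else 0 := by
      intro i hi
      rw [mem_range] at hi
      have hjstep : ∀ j ∈ range (2 * l),
          (if i < j then
            tilde k r (Fpsi k r l ψ i) * tilde k r (Fpsi k r l ψ j) * G ^ (i + j + 1 - 2 * l) *
              ((i.choose a * j.choose (2 * l - a - 1) +
                  i.choose (2 * l - a - 1) * j.choose a : ℕ) : URing k r)
          else 0)
          = if j = 2 * l - 1 then
              (if i < l then MvPolynomial.C ((i.factorial : k)⁻¹ * (i.choose a * cc)) *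
                tilde k r (ψ i) * G ^ i else 0) else 0 := by
        intro j hj
        rw [mem_range] at hj
        by_cases hje : j = 2 * l - 1
        · subst hje
          rw [if_pos rfl]
          by_cases hil : i < l
          · rw [if_pos (by omega), if_pos hil, htF i hil, htF1]
            have he : i + (2 * l - 1) + 1 - 2 * l = i := by omega
            have hc : i.choose a * (2 * l - 1).choose (2 * l - a - 1) +
                i.choose (2 * l - a - 1) * (2 * l - 1).choose a
                = i.choose a * (2 * l - 1).choose a := by
              rw [Nat.choose_eq_zero_of_lt (show i < 2 * l - a - 1 by omega),
                show 2 * l - a - 1 = 2 * l - 1 - a by omega, Nat.choose_symm ha']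
              ring
            rw [he, hc, hcast]
            simp only [hcc, Nat.cast_mul, MvPolynomial.C_mul]
            ring
          · rw [if_neg hil]
            by_cases hii : i < 2 * l - 1
            · rw [if_pos hii, htF0 i (by omega) hii]
              ring
            · rw [if_neg (by omega)]
        · rw [if_neg hje]
          by_cases hij : i < j
          · rw [if_pos hij]
            by_cases hjl : j < l
            · have h1 : j.choose (2 * l - a - 1) = 0 :=
                Nat.choose_eq_zero_of_lt (by omega)
              have h2 : i.choose (2 * l - a - 1) = 0 :=
                Nat.choose_eq_zero_of_lt (by omega)
              rw [h1, h2]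
              push_cast
              ring
            · rw [htF0 j (by omega) (by omega)]
              ring
          · rw [if_neg hij]
      rw [Finset.sum_congr rfl hjstep, Finset.sum_ite_eq' (range (2 * l)) (2 * l - 1)]
      rw [if_pos (by rw [mem_range]; omega)]
    rw [Finset.sum_congr rfl hinner, ← Finset.sum_filter]
    congr 1
    ext x
    simp only [mem_filter, mem_range]
    omega
  -- the diagonal sum
  have hdiag : (∑ i ∈ range (2 * l),
      tilde k r (Fpsi k r l ψ i) ^ 2 * G ^ (2 * i + 1 - 2 * l) *
        ((i.choose a * i.choose (2 * l - a - 1) : ℕ) : URing k r))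
      = MvPolynomial.C (cc ^ 2) * G ^ (2 * l - 1) := by
    rw [Finset.sum_eq_single_of_mem (2 * l - 1) (by rw [mem_range]; omega)]
    · rw [htF1]
      have he : 2 * (2 * l - 1) + 1 - 2 * l = 2 * l - 1 := by omega
      have hc : (2 * l - 1).choose (2 * l - a - 1) = (2 * l - 1).choose a := by
        rw [show 2 * l - a - 1 = 2 * l - 1 - a by omega, Nat.choose_symm ha']
      rw [he, hc, hcast]
      simp only [hcc, Nat.cast_mul, MvPolynomial.C_mul, pow_two]
      ring
    · intro b hb hbne
      rw [mem_range] at hb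
      by_cases hbl : b < l
      · rw [Nat.choose_eq_zero_of_lt (show b < 2 * l - a - 1 by omega)]
        push_cast
        ring
      · rw [htF0 b (by omega) (by omega)]
        ring
  rw [fA, ← hG, hdouble, hdiag, add_comm, mul_add]
  have hc1 : (a.factorial : k) * cc⁻¹ * cc ^ 2
      = ((2 * l - 1).factorial : k) / ((2 * l - 1 - a).factorial : k) := by
    have hNat : (2 * l - 1).choose a * a.factorial * (2 * l - 1 - a).factorial
        = (2 * l - 1).factorial := Nat.choose_mul_factorial_mul_factorial ha'
    have hfne : ((2 * l - 1 - a).factorial : k) ≠ 0 :=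
      Nat.cast_ne_zero.mpr (Nat.factorial_ne_zero _)
    have hk := congrArg (Nat.cast : ℕ → k) hNat
    push_cast at hk
    rw [hcc] at *
    field_simp
    linear_combination hk
  congr 1
  · rw [← mul_assoc, ← MvPolynomial.C_mul, hc1]
  · rw [Finset.mul_sum]
    have hIcc : Finset.Icc a (l - 1) ⊆ range l := by
      intro x hx; rw [Finset.mem_Icc] at hx; rw [mem_range]; omega
    have hvan : ∀ x ∈ range l, x ∉ Finset.Icc a (l - 1) →
        MvPolynomial.C ((a.factorial : k) * cc⁻¹) *
          (MvPolynomial.C ((x.factorial : k)⁻¹ * ((x.choose a : k) * cc)) *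
            tilde k r (ψ x) * G ^ x) = 0 := by
      intro x hx hxn
      rw [mem_range] at hx
      rw [Finset.mem_Icc] at hxn
      have hxa : x < a := by omega
      rw [Nat.choose_eq_zero_of_lt hxa]
      simp
    rw [← Finset.sum_subset hIcc hvan]
    apply Finset.sum_congr rfl
    · intro i hi
      rw [Finset.mem_Icc] at hi
      have hai : a ≤ i := hi.1
      have hci : (a.factorial : k) * cc⁻¹ *
          ((i.factorial : k)⁻¹ * ((i.choose a : k) * cc)) = ((i - a).factorial : k)⁻¹ := by
        have hNat : i.choose a * a.factorial * (i - a).factorial = i.factorial :=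
          Nat.choose_mul_factorial_mul_factorial hai
        have h1 : ((i.factorial : k)) ≠ 0 := Nat.cast_ne_zero.mpr (Nat.factorial_ne_zero _)
        have h2 : (((i - a).factorial : k)) ≠ 0 := Nat.cast_ne_zero.mpr (Nat.factorial_ne_zero _)
        have hk := congrArg (Nat.cast : ℕ → k) hNat
        push_cast at hk
        field_simp
        linear_combination hk
      rw [← mul_assoc, ← mul_assoc, ← MvPolynomial.C_mul, hci]
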